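/- arXiv:1309.0953 — 6 statements merged into one kernel-verified Lean document; each statement's English description precedes it below -/
import Mathlib

section
/- Let a > 2 + √2 and H > 0, set x₃* = (1 + √(1 + 8H(a−2)(2a−1)))/(2(a−2)(2a−1)), x₁* = 2(a−1)x₃*, x₂* = 1 − (3a−2)x₃*. Then (x₁*, x₂*, x₃*) is an equilibrium of the harvested one predator–two prey system: 1 − x₁* − x₂* − a·x₃* = 0, 1 − (3/2)x₁* − x₂* − x₃* = 0, and x₃*·(−1 + (a/2)x₁* + (1/2)x₂*) − H = 0. -/
/-- Let `a > 2 + √2` and `H > 0`, set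
`x₃* = (1 + √(1 + 8H(a−2)(2a−1)))/(2(a−2)(2a−1))`, `x₁* = 2(a−1)x₃*`,
`x₂* = 1 − (3a−2)x₃*`. Then `(x₁*, x₂*, x₃*)` is an equilibrium of the harvested
one predator–two prey system:
`1 − x₁* − x₂* − a·x₃* = 0`, `1 − (3/2)x₁* − x₂* − x₃* = 0`, and
`x₃*·(−1 + (a/2)x₁* + (1/2)x₂*) − H = 0`. -/
theorem stmt_1 (a H x₁ x₂ x₃ : ℝ)
    (ha : a > 2 + Real.sqrt 2) (hH : H > 0)
    (hx₃ : x₃ = (1 + Real.sqrt (1 + 8 * H * (a - 2) * (2 * a - 1))) /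
      (2 * (a - 2) * (2 * a - 1)))
    (hx₁ : x₁ = 2 * (a - 1) * x₃)
    (hx₂ : x₂ = 1 - (3 * a - 2) * x₃) :
    1 - x₁ - x₂ - a * x₃ = 0 ∧
      1 - (3 / 2) * x₁ - x₂ - x₃ = 0 ∧
      x₃ * (-1 + (a / 2) * x₁ + (1 / 2) * x₂) - H = 0 := by
  have hsqrt2 : Real.sqrt 2 ≥ 0 := Real.sqrt_nonneg 2
  have ha2 : a - 2 > 0 := by linarith
  have ha1 : 2 * a - 1 > 0 := by linarith
  have harg : (0:ℝ) ≤ 1 + 8 * H * (a - 2) * (2 * a - 1) := by positivity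
  have hs2 : Real.sqrt (1 + 8 * H * (a - 2) * (2 * a - 1)) ^ 2
      = 1 + 8 * H * (a - 2) * (2 * a - 1) := Real.sq_sqrt harg
  subst hx₁ hx₂ hx₃
  refine ⟨by ring, by ring, ?_⟩
  have hne : 2 * (a - 2) * (2 * a - 1) ≠ 0 := by positivity
  have ha1' : a * 2 - 1 ≠ 0 := by linarith
  field_simp
  have hs2' : Real.sqrt (1 + 8 * H * (a - 2) * (a * 2 - 1)) ^ 2
      = 1 + 8 * H * (a - 2) * (a * 2 - 1) := by rw [mul_comm a 2]; exact hs2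
  nlinarith [hs2']
end

section
/- Let a > 2 + √2 and H > 0, and define x₃* = (1 + √(1 + 8H(a−2)(2a−1)))/(2(a−2)(2a−1)), x₁* = 2(a−1)x₃*, x₂* = 1 − (3a−2)x₃*. Then x₃* > 0 and x₁* > 0; moreover x₂* > 0 if and only if H·(3a−2)² < a² − 4a + 2. In particular, when H·(3a−2)² < a² − 4a + 2 all three coordinates of the equilibrium are positive. -/
/-- Let `a > 2 + √2` and `H > 0`, and define
`x₃* = (1 + √(1 + 8H(a−2)(2a−1)))/(2(a−2)(2a−1))`, `x₁* = 2(a−1)x₃*`,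
`x₂* = 1 − (3a−2)x₃*`. Then `x₃* > 0` and `x₁* > 0`; moreover `x₂* > 0` if and
only if `H·(3a−2)² < a² − 4a + 2`. In particular, when `H·(3a−2)² < a² − 4a + 2`
all three coordinates of the equilibrium are positive. -/
theorem stmt_2 (a H x₁ x₂ x₃ : ℝ)
    (ha : a > 2 + Real.sqrt 2) (hH : H > 0)
    (hx₃ : x₃ = (1 + Real.sqrt (1 + 8 * H * (a - 2) * (2 * a - 1))) /
      (2 * (a - 2) * (2 * a - 1)))
    (hx₁ : x₁ = 2 * (a - 1) * x₃)
    (hx₂ : x₂ = 1 - (3 * a - 2) * x₃) :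
    x₃ > 0 ∧ x₁ > 0 ∧
      (x₂ > 0 ↔ H * (3 * a - 2) ^ 2 < a ^ 2 - 4 * a + 2) ∧
      (H * (3 * a - 2) ^ 2 < a ^ 2 - 4 * a + 2 → x₁ > 0 ∧ x₂ > 0 ∧ x₃ > 0) := by
  have hs2 : Real.sqrt 2 ^ 2 = 2 := Real.sq_sqrt (by norm_num)
  have hs2n : (0:ℝ) ≤ Real.sqrt 2 := Real.sqrt_nonneg 2
  have ha2 : a > 2 := by nlinarith
  have hq : a ^ 2 - 4 * a + 2 > 0 := by nlinarith
  have hkpos : (a - 2) * (2 * a - 1) > 0 := by nlinarith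
  have hargpos : (0:ℝ) ≤ 1 + 8 * H * (a - 2) * (2 * a - 1) := by nlinarith
  set s := Real.sqrt (1 + 8 * H * (a - 2) * (2 * a - 1)) with hsdef
  have hssq : s ^ 2 = 1 + 8 * H * (a - 2) * (2 * a - 1) := Real.sq_sqrt hargpos
  have hsnn : (0:ℝ) ≤ s := Real.sqrt_nonneg _
  have hD : (0:ℝ) < 2 * (a - 2) * (2 * a - 1) := by nlinarith
  have hx3 : x₃ > 0 := by
    rw [hx₃]; exact div_pos (by linarith) hD
  have hx1 : x₁ > 0 := by rw [hx₁]; nlinarith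
  have hc : (0:ℝ) < 2 * ((a - 2) * (2 * a - 1)) - (3 * a - 2) := by nlinarith
  have h3a : (0:ℝ) < 3 * a - 2 := by linarith
  have key : x₂ > 0 ↔ (3 * a - 2) * (1 + s) < 2 * (a - 2) * (2 * a - 1) := by
    rw [hx₂, hx₃]
    rw [gt_iff_lt, sub_pos, ← mul_div_assoc, div_lt_iff₀ hD, one_mul]
  have hiff : x₂ > 0 ↔ H * (3 * a - 2) ^ 2 < a ^ 2 - 4 * a + 2 := by
    rw [key]
    constructor
    · intro h
      have hlt : (3 * a - 2) * s < 2 * ((a - 2) * (2 * a - 1)) - (3 * a - 2) := by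
        nlinarith
      have hsq : ((3 * a - 2) * s) ^ 2 <
          (2 * ((a - 2) * (2 * a - 1)) - (3 * a - 2)) ^ 2 := by
        have hln : (0:ℝ) ≤ (3 * a - 2) * s := by positivity
        nlinarith
      nlinarith
    · intro h
      have hsq : ((3 * a - 2) * s) ^ 2 <
          (2 * ((a - 2) * (2 * a - 1)) - (3 * a - 2)) ^ 2 := by
        nlinarith
      have := lt_of_pow_lt_pow_left₀ 2 (le_of_lt hc) hsq
      nlinarith
  refine ⟨hx3, hx1, hiff, fun h => ⟨hx1, hiff.mpr h, hx3⟩⟩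
end

section
/- Let a > 2 + √2 and H > 0 with H·(3a−2)² < a² − 4a + 2, and let x₁*, x₂*, x₃* be the positive equilibrium coordinates. Define a₃ = (1/4)·x₁*·x₂*·x₃*·(2a−1)(a−2) and a₅ = (1/2)·x₁*·x₂*·H/x₃*. Then a₃ > a₅ > 0; in particular a₃² − a₅² > 0. -/
set_option maxHeartbeats 1000000


/-- Let `a > 2 + √2` and `H > 0` with `H·(3a−2)² < a² − 4a + 2`, and
let `x₁*, x₂*, x₃*` be the positive equilibrium coordinates. Define
`a₃ = (1/4)·x₁*·x₂*·x₃*·(2a−1)(a−2)` and `a₅ = (1/2)·x₁*·x₂*·H/x₃*`. Then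
`a₃ > a₅ > 0`; in particular `a₃² − a₅² > 0`. -/
theorem stmt_3 (a H x₁ x₂ x₃ a₃ a₅ : ℝ)
    (ha : a > 2 + Real.sqrt 2) (hH : H > 0)
    (hHc : H * (3 * a - 2) ^ 2 < a ^ 2 - 4 * a + 2)
    (hx₃ : x₃ = (1 + Real.sqrt (1 + 8 * H * (a - 2) * (2 * a - 1))) /
      (2 * (a - 2) * (2 * a - 1)))
    (hx₁ : x₁ = 2 * (a - 1) * x₃)
    (hx₂ : x₂ = 1 - (3 * a - 2) * x₃)
    (ha₃ : a₃ = (1 / 4) * x₁ * x₂ * x₃ * ((2 * a - 1) * (a - 2)))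
    (ha₅ : a₅ = (1 / 2) * x₁ * x₂ * H / x₃) :
    a₃ > a₅ ∧ a₅ > 0 ∧ a₃ ^ 2 - a₅ ^ 2 > 0 := by
  have h2 : Real.sqrt 2 ^ 2 = 2 := Real.sq_sqrt (by norm_num)
  have h2n : Real.sqrt 2 ≥ 0 := Real.sqrt_nonneg 2
  have h2g : Real.sqrt 2 > 7/5 := by nlinarith
  have haa : a > 17/5 := by linarith
  have hE : a ^ 2 - 4 * a + 2 > 0 := by nlinarith [sq_nonneg (a - 2 - Real.sqrt 2)]
  have hD : (a - 2) * (2 * a - 1) > 0 := by nlinarith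
  have hins : 1 + 8 * H * (a - 2) * (2 * a - 1) > 1 := by nlinarith
  set s := Real.sqrt (1 + 8 * H * (a - 2) * (2 * a - 1)) with hsdef
  have hs0 : s ≥ 0 := Real.sqrt_nonneg _
  have hs2 : s ^ 2 = 1 + 8 * H * (a - 2) * (2 * a - 1) := Real.sq_sqrt (by linarith)
  clear_value s
  have hs1 : s > 1 := by nlinarith
  have ha2 : a - 2 ≠ 0 := by nlinarith
  have h2a : 2 * a - 1 ≠ 0 := by nlinarith
  have h2Dx : 2 * ((a - 2) * (2 * a - 1)) * x₃ = 1 + s := by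
    rw [hx₃]; field_simp
  have hquad : (a - 2) * (2 * a - 1) * x₃ ^ 2 = x₃ + 2 * H := by
    have hseq : s = 2 * ((a - 2) * (2 * a - 1)) * x₃ - 1 := by linarith
    rw [hseq] at hs2
    have h6 : 4 * ((a - 2) * (2 * a - 1)) * ((a - 2) * (2 * a - 1) * x₃ ^ 2 - (x₃ + 2 * H)) = 0 := by
      linear_combination hs2
    rcases mul_eq_zero.mp h6 with h | h
    · exfalso; linarith
    · linarith
  have hx₃pos : x₃ > 0 := by
    rw [hx₃]
    exact div_pos (by linarith) (by linarith [hD])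
  have hx₁pos : x₁ > 0 := by rw [hx₁]; exact mul_pos (by linarith) hx₃pos
  have hdiffE : a ^ 2 - 4 * a + 2 - H * (3 * a - 2) ^ 2 > 0 := by linarith
  have hexp : (2 * ((a - 2) * (2 * a - 1)) - (3 * a - 2)) ^ 2 - (s * (3 * a - 2)) ^ 2 =
      8 * ((a - 2) * (2 * a - 1)) * (a ^ 2 - 4 * a + 2 - H * (3 * a - 2) ^ 2) := by
    linear_combination (-(3 * a - 2) ^ 2) * hs2
  have hsq : (s * (3 * a - 2)) ^ 2 < (2 * ((a - 2) * (2 * a - 1)) - (3 * a - 2)) ^ 2 := by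
    nlinarith [hexp, mul_pos hD hdiffE]
  have hT2 : 2 * ((a - 2) * (2 * a - 1)) - (3 * a - 2) > 0 := by nlinarith
  have hTpos : (3 : ℝ) * a - 2 > 0 := by nlinarith
  have key : s * (3 * a - 2) < 2 * ((a - 2) * (2 * a - 1)) - (3 * a - 2) := by
    nlinarith [hsq, hT2, mul_nonneg hs0 (le_of_lt hTpos)]
  have hTx : (3 * a - 2) * x₃ < 1 := by nlinarith [h2Dx, key, hTpos, hD]
  have hx₂pos : x₂ > 0 := by rw [hx₂]; linarith
  have ha₅pos : a₅ > 0 := by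
    rw [ha₅]
    apply div_pos _ hx₃pos
    nlinarith [mul_pos (mul_pos hx₁pos hx₂pos) hH]
  have ha5x : a₅ * x₃ = (1 / 2) * x₁ * x₂ * H := by
    rw [ha₅]; field_simp
  have hdiff : (a₃ - a₅) * x₃ = (1 / 4) * x₁ * x₂ * x₃ := by
    linear_combination x₃ * ha₃ - ha5x + (1 / 4) * x₁ * x₂ * hquad
  have h9 : 0 < (a₃ - a₅) * x₃ := by
    rw [hdiff]; linarith [mul_pos (mul_pos hx₁pos hx₂pos) hx₃pos]
  have hgt : a₃ > a₅ := by
    rcases mul_pos_iff.mp h9 with ⟨h, _⟩ | ⟨_, h⟩ <;> linarith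
  have hfin : a₃ ^ 2 - a₅ ^ 2 > 0 := by
    have h10 : 0 < (a₃ - a₅) * (a₃ + a₅) :=
      mul_pos (sub_pos.mpr hgt) (by linarith)
    linarith [h10, sq_nonneg (a₃ - a₅)]
  exact ⟨hgt, ha₅pos, hfin⟩
end

section
/- Let c* = sSup {k ∈ ℝ | there exists x > 0 with cos x = 1 − kx/π}. Then 2 < c* < 3 (numerically c* ≈ 2.2764), and for every x ≥ 0 one has cos x ≥ 1 − c*·x/π. -/
open Real

/-- If `g 0 = 0` and `g` has nonnegative derivative on `[0, ∞)`, then `g ≥ 0` there. -/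
lemma aux_nonneg_of_deriv (g g' : ℝ → ℝ) (hg : ∀ x, HasDerivAt g (g' x) x)
    (h0 : g 0 = 0) (hd : ∀ x, 0 ≤ x → 0 ≤ g' x) : ∀ x, 0 ≤ x → 0 ≤ g x := by
  have hmono : MonotoneOn g (Set.Ici (0 : ℝ)) := by
    apply monotoneOn_of_deriv_nonneg (convex_Ici 0)
    · exact fun x _ => (hg x).continuousAt.continuousWithinAt
    · exact fun x _ => ((hg x).differentiableAt).differentiableWithinAt
    · intro x hx
      rw [(hg x).deriv]
      exact hd x (le_of_lt (by simpa using hx))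
  intro x hx
  have := hmono (Set.self_mem_Ici) (Set.mem_Ici.2 hx) hx
  linarith [this]

lemma aux_sin_lb : ∀ x : ℝ, 0 ≤ x → x - x ^ 3 / 6 ≤ Real.sin x := by
  have h := aux_nonneg_of_deriv (fun x => Real.sin x - (x - x ^ 3 / 6))
    (fun x => Real.cos x - (1 - x ^ 2 / 2))
    (fun x => by
      have h1 := Real.hasDerivAt_sin x
      have h2 : HasDerivAt (fun x : ℝ => x - x ^ 3 / 6) (1 - x ^ 2 / 2) x := by
        have := ((hasDerivAt_pow 3 x).div_const 6)
        have := (hasDerivAt_id x).sub this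
        exact this.congr_deriv (by norm_num; ring)
      exact h1.sub h2)
    (by simp)
    (fun x _ => by have := Real.one_sub_sq_div_two_le_cos (x := x); linarith)
  intro x hx; have := h x hx; simpa using by linarith [this]

lemma aux_cos_ub : ∀ x : ℝ, 0 ≤ x → Real.cos x ≤ 1 - x ^ 2 / 2 + x ^ 4 / 24 := by
  have h := aux_nonneg_of_deriv (fun x => (1 - x ^ 2 / 2 + x ^ 4 / 24) - Real.cos x)
    (fun x => (-x + x ^ 3 / 6) + Real.sin x)
    (fun x => by
      have h1 : HasDerivAt (fun x : ℝ => 1 - x ^ 2 / 2 + x ^ 4 / 24) (-x + x ^ 3 / 6) x := by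
        have h2 := ((hasDerivAt_pow 2 x).div_const 2)
        have h3 := ((hasDerivAt_pow 4 x).div_const 24)
        have := ((hasDerivAt_const x (1:ℝ)).sub h2).add h3
        exact this.congr_deriv (by norm_num; ring)
      have := h1.sub (Real.hasDerivAt_cos x)
      exact this.congr_deriv (by ring))
    (by simp)
    (fun x hx => by have := aux_sin_lb x hx; linarith)
  intro x hx; have := h x hx; simpa using by linarith [this]

lemma aux_sin_ub : ∀ x : ℝ, 0 ≤ x → Real.sin x ≤ x - x ^ 3 / 6 + x ^ 5 / 120 := by
  have h := aux_nonneg_of_deriv (fun x => (x - x ^ 3 / 6 + x ^ 5 / 120) - Real.sin x)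
    (fun x => (1 - x ^ 2 / 2 + x ^ 4 / 24) - Real.cos x)
    (fun x => by
      have h1 : HasDerivAt (fun x : ℝ => x - x ^ 3 / 6 + x ^ 5 / 120)
          (1 - x ^ 2 / 2 + x ^ 4 / 24) x := by
        have h2 := ((hasDerivAt_pow 3 x).div_const 6)
        have h3 := ((hasDerivAt_pow 5 x).div_const 120)
        have := ((hasDerivAt_id x).sub h2).add h3
        exact this.congr_deriv (by norm_num; ring)
      exact h1.sub (Real.hasDerivAt_sin x))
    (by simp)
    (fun x hx => by have := aux_cos_ub x hx; linarith)
  intro x hx; have := h x hx; simpa using by linarith [this]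

/-- Degree-6 Taylor lower bound for cosine on `[0, ∞)`. -/
lemma aux_cos_lb : ∀ x : ℝ, 0 ≤ x → 1 - x ^ 2 / 2 + x ^ 4 / 24 - x ^ 6 / 720 ≤ Real.cos x := by
  have h := aux_nonneg_of_deriv
    (fun x => Real.cos x - (1 - x ^ 2 / 2 + x ^ 4 / 24 - x ^ 6 / 720))
    (fun x => (x - x ^ 3 / 6 + x ^ 5 / 120) - Real.sin x)
    (fun x => by
      have h1 : HasDerivAt (fun x : ℝ => 1 - x ^ 2 / 2 + x ^ 4 / 24 - x ^ 6 / 720)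
          (-(x - x ^ 3 / 6 + x ^ 5 / 120)) x := by
        have h2 := ((hasDerivAt_pow 2 x).div_const 2)
        have h3 := ((hasDerivAt_pow 4 x).div_const 24)
        have h4 := ((hasDerivAt_pow 6 x).div_const 720)
        have := (((hasDerivAt_const x (1:ℝ)).sub h2).add h3).sub h4
        exact this.congr_deriv (by norm_num; ring)
      have := (Real.hasDerivAt_cos x).sub h1
      exact this.congr_deriv (by ring))
    (by simp)
    (fun x hx => by have := aux_sin_ub x hx; linarith)
  intro x hx; have := h x hx; simpa using by linarith [this]

/-- The key uniform bound: `π (1 - cos x) ≤ 2.9 x` for `x ≥ 0`. -/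
lemma aux_key : ∀ x : ℝ, 0 < x → Real.pi * (1 - Real.cos x) ≤ 2.9 * x := by
  intro x hx
  rcases le_or_gt x 2.2 with h | h
  · have hcos := aux_cos_lb x hx.le
    have hpi : Real.pi ≤ 3.15 := Real.pi_lt_d2.le
    have ht : (0:ℝ) ≤ x ^ 2 / 2 - x ^ 4 / 24 + x ^ 6 / 720 := by
      have := Real.cos_le_one x; linarith
    have h1 : Real.pi * (1 - Real.cos x) ≤ 3.15 * (x ^ 2 / 2 - x ^ 4 / 24 + x ^ 6 / 720) := by
      have h2 : Real.pi * (1 - Real.cos x) ≤ Real.pi * (x ^ 2 / 2 - x ^ 4 / 24 + x ^ 6 / 720) := by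
        apply mul_le_mul_of_nonneg_left (by linarith) Real.pi_pos.le
      have h3 : Real.pi * (x ^ 2 / 2 - x ^ 4 / 24 + x ^ 6 / 720)
          ≤ 3.15 * (x ^ 2 / 2 - x ^ 4 / 24 + x ^ 6 / 720) :=
        mul_le_mul_of_nonneg_right hpi ht
      linarith
    nlinarith [sq_nonneg x, sq_nonneg (x - 2.2), mul_pos hx hx, sq_nonneg (x*x - 4.84),
      mul_nonneg (mul_nonneg hx.le hx.le) (sub_nonneg.2 h), mul_nonneg hx.le (sub_nonneg.2 h)]
  · have hcos := Real.neg_one_le_cos x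
    have hpi : Real.pi ≤ 3.15 := Real.pi_lt_d2.le
    have : Real.pi * (1 - Real.cos x) ≤ 3.15 * 2 := by nlinarith [Real.pi_pos]
    linarith

/-- Let `c* = sSup {k ∈ ℝ | ∃ x > 0, cos x = 1 − kx/π}`. Then
`2 < c* < 3` (numerically `c* ≈ 2.2764`), and for every `x ≥ 0` one has
`cos x ≥ 1 − c*·x/π`. -/
theorem stmt_12 (c : ℝ)
    (hc : c = sSup {k : ℝ | ∃ x > (0 : ℝ), Real.cos x = 1 - k * x / Real.pi}) :
    2 < c ∧ c < 3 ∧ ∀ x ≥ (0 : ℝ), Real.cos x ≥ 1 - c * x / Real.pi := by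
  set S := {k : ℝ | ∃ x > (0 : ℝ), Real.cos x = 1 - k * x / Real.pi} with hS
  have hpi := Real.pi_pos
  -- every element of S is ≤ 2.9
  have hub : ∀ k ∈ S, k ≤ 2.9 := by
    rintro k ⟨x, hx, hkx⟩
    have hkey := aux_key x hx
    have : 1 - Real.cos x = k * x / Real.pi := by linarith
    have h2 : Real.pi * (k * x / Real.pi) ≤ 2.9 * x := by rw [← this]; exact hkey
    have h3 : k * x ≤ 2.9 * x := by
      rwa [mul_div_assoc', mul_comm, mul_div_assoc, div_self (ne_of_gt hpi), mul_one] at h2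
    exact le_of_mul_le_mul_right (by linarith [h3]) hx
  have hbdd : BddAbove S := ⟨2.9, hub⟩
  -- (4 + 2√2)/3 ∈ S
  have hsqrt2 : Real.sqrt 2 ^ 2 = 2 := Real.sq_sqrt (by norm_num)
  have hsqrt2_pos : 1 < Real.sqrt 2 := by
    nlinarith [Real.sqrt_nonneg 2]
  have hmem : (4 + 2 * Real.sqrt 2) / 3 ∈ S := by
    refine ⟨3 * Real.pi / 4, by positivity, ?_⟩
    have h34 : Real.cos (3 * Real.pi / 4) = -(Real.sqrt 2 / 2) := by
      have : (3 : ℝ) * Real.pi / 4 = Real.pi - Real.pi / 4 := by ring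
      rw [this, Real.cos_pi_sub, Real.cos_pi_div_four]
    rw [h34]
    field_simp
    ring
  have hlow : (4 + 2 * Real.sqrt 2) / 3 ≤ c := hc ▸ le_csSup hbdd hmem
  have hc3 : c ≤ 2.9 := hc ▸ csSup_le ⟨_, hmem⟩ hub
  refine ⟨by nlinarith, by linarith, ?_⟩
  intro x hx
  rcases eq_or_lt_of_le hx with rfl | hx'
  · simp
  · set k := Real.pi * (1 - Real.cos x) / x with hk
    have hkmem : k ∈ S := by
      refine ⟨x, hx', ?_⟩
      rw [hk]
      field_simp
      ring
    have hkc : k ≤ c := hc ▸ le_csSup hbdd hkmem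
    have h1 : Real.pi * (1 - Real.cos x) = k * x := by
      rw [hk]; field_simp
    have h2 : k * x ≤ c * x := mul_le_mul_of_nonneg_right hkc hx
    have h3 : Real.pi * (1 - Real.cos x) ≤ c * x := by linarith
    have h4 : 1 - Real.cos x ≤ c * x / Real.pi := by
      rw [le_div_iff₀ hpi]
      nlinarith
    linarith
end

section
/- Let f : ℝ → ℝ be a probability density of delay with finite expectation E = ∫₀^∞ τ f(τ) dτ, and let ω > 0. Then ∫₀^∞ f(τ)cos(ωτ) dτ ≥ 1 − c*·ω·E/π, where c* = sSup {k ∈ ℝ | there exists x > 0 with cos x = 1 − kx/π}. -/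
open MeasureTheory

lemma sin_sq_le_sq (t : ℝ) : Real.sin t ^ 2 ≤ t ^ 2 := by
  rcases le_or_gt 0 t with h | h
  · have h1 : Real.sin t ≤ t := Real.sin_le h
    have h2 : -t ≤ Real.sin t := by
      rcases le_or_gt t Real.pi with hπ | hπ
      · have := Real.sin_nonneg_of_nonneg_of_le_pi h hπ; linarith
      · have := Real.neg_one_le_sin t
        have := Real.pi_gt_three
        linarith
    nlinarith
  · have h1 : Real.sin (-t) ≤ -t := Real.sin_le (by linarith)
    have h2 : -(-t) ≤ Real.sin (-t) := by
      rcases le_or_gt (-t) Real.pi with hπ | hπ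
      · have := Real.sin_nonneg_of_nonneg_of_le_pi (by linarith : (0:ℝ) ≤ -t) hπ; linarith
      · have := Real.neg_one_le_sin (-t)
        have := Real.pi_gt_three
        linarith
    rw [Real.sin_neg] at h1 h2
    nlinarith

lemma one_sub_cos_le_sq (x : ℝ) : 1 - Real.cos x ≤ x ^ 2 / 2 := by
  have h1 := Real.cos_two_mul' (x / 2)
  have h2 := Real.sin_sq_add_cos_sq (x / 2)
  rw [show 2 * (x / 2) = x by ring] at h1
  have hs := sin_sq_le_sq (x / 2)
  nlinarith

lemma cos_ge_of_sSup (c : ℝ)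
    (hc : c = sSup {k : ℝ | ∃ x > (0 : ℝ), Real.cos x = 1 - k * x / Real.pi}) :
    ∀ x : ℝ, 0 ≤ x → 1 - c * x / Real.pi ≤ Real.cos x := by
  have hπ := Real.pi_pos
  have hbdd : BddAbove {k : ℝ | ∃ x > (0 : ℝ), Real.cos x = 1 - k * x / Real.pi} := by
    refine ⟨2 * Real.pi, fun k hk => ?_⟩
    obtain ⟨x, hx, hcos⟩ := hk
    have hk' : k * x / Real.pi = 1 - Real.cos x := by linarith
    have hk2 : k * x = Real.pi * (1 - Real.cos x) := by
      field_simp at hk'; linarith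
    have hub : 1 - Real.cos x ≤ 2 * x := by
      rcases le_or_gt x 4 with h4 | h4
      · have := one_sub_cos_le_sq x; nlinarith
      · have := Real.neg_one_le_cos x; nlinarith
    have : k * x ≤ 2 * Real.pi * x := by
      rw [hk2]; nlinarith
    exact le_of_mul_le_mul_right (by linarith) hx
  intro x hx
  rcases eq_or_lt_of_le hx with rfl | hx'
  · simp
  · set k := Real.pi * (1 - Real.cos x) / x with hkdef
    have hmem : k ∈ {k : ℝ | ∃ x > (0 : ℝ), Real.cos x = 1 - k * x / Real.pi} := by
      refine ⟨x, hx', ?_⟩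
      rw [hkdef]; field_simp; ring
    have hkc : k ≤ c := hc ▸ le_csSup hbdd hmem
    have hkeq : Real.cos x = 1 - k * x / Real.pi := by
      rw [hkdef]; field_simp; ring
    rw [hkeq]
    have h2 : k * x / Real.pi ≤ c * x / Real.pi :=
      div_le_div_of_nonneg_right (mul_le_mul_of_nonneg_right hkc hx'.le) hπ.le
    linarith

/-- Let `f : ℝ → ℝ` be a probability density of delay with finite
expectation `E = ∫₀^∞ τ f(τ) dτ`, and let `ω > 0`. Then
`∫₀^∞ f(τ)cos(ωτ) dτ ≥ 1 − c*·ω·E/π`, where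
`c* = sSup {k ∈ ℝ | ∃ x > 0, cos x = 1 − kx/π}`. -/
theorem stmt_13 (f : ℝ → ℝ) (E ω c : ℝ)
    (hf_int : IntegrableOn f (Set.Ioi 0))
    (hf_nonneg : ∀ τ ≥ (0 : ℝ), 0 ≤ f τ)
    (hf_one : ∫ τ in Set.Ioi (0 : ℝ), f τ = 1)
    (hE_int : IntegrableOn (fun τ => τ * f τ) (Set.Ioi 0))
    (hE : E = ∫ τ in Set.Ioi (0 : ℝ), τ * f τ)
    (hω : ω > 0)
    (hc : c = sSup {k : ℝ | ∃ x > (0 : ℝ), Real.cos x = 1 - k * x / Real.pi}) :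
    (∫ τ in Set.Ioi (0 : ℝ), f τ * Real.cos (ω * τ)) ≥
      1 - c * ω * E / Real.pi := by
  have hπ := Real.pi_pos
  have hcos := cos_ge_of_sSup c hc
  have hint1 : IntegrableOn (fun τ => f τ * Real.cos (ω * τ)) (Set.Ioi 0) := by
    have h := Integrable.bdd_mul (c := 1) hf_int
      ((Real.continuous_cos.comp (continuous_const.mul continuous_id)).aestronglyMeasurable)
      (Filter.Eventually.of_forall fun τ => by
        simpa using Real.abs_cos_le_one (ω * τ))
    exact h.congr (Filter.Eventually.of_forall fun τ => mul_comm _ _)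
  have hint2 : IntegrableOn (fun τ => f τ - (c * ω / Real.pi) * (τ * f τ)) (Set.Ioi 0) :=
    hf_int.sub (hE_int.const_mul _)
  have hmono : ∀ τ ∈ Set.Ioi (0 : ℝ),
      f τ - (c * ω / Real.pi) * (τ * f τ) ≤ f τ * Real.cos (ω * τ) := by
    intro τ hτ
    have hτ0 : (0 : ℝ) < τ := hτ
    have hfτ := hf_nonneg τ hτ0.le
    have h := hcos (ω * τ) (by positivity)
    have hmul : f τ * (1 - c * (ω * τ) / Real.pi) ≤ f τ * Real.cos (ω * τ) :=
      mul_le_mul_of_nonneg_left h hfτ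
    calc f τ - (c * ω / Real.pi) * (τ * f τ) = f τ * (1 - c * (ω * τ) / Real.pi) := by ring
      _ ≤ f τ * Real.cos (ω * τ) := hmul
  have key : ∫ τ in Set.Ioi (0 : ℝ), (f τ - (c * ω / Real.pi) * (τ * f τ))
      ≤ ∫ τ in Set.Ioi (0 : ℝ), f τ * Real.cos (ω * τ) :=
    setIntegral_mono_on hint2 hint1 measurableSet_Ioi hmono
  have heval : ∫ τ in Set.Ioi (0 : ℝ), (f τ - (c * ω / Real.pi) * (τ * f τ))
      = 1 - c * ω * E / Real.pi := by
    rw [integral_sub hf_int (hE_int.const_mul _), integral_const_mul, hf_one, ← hE]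
    ring
  rw [heval] at key
  exact key
end

section
/- Let f : ℝ → ℝ be a probability density of delay with finite expectation E₁ = ∫₀^∞ τ f(τ) dτ, let a₁,…,a₅ be real constants, and let ω₁ > 0 with a₃² + a₄²ω₁² ≠ 0. If λ = iω₁ is a root of the characteristic function χ(λ) = λ³ + a₁λ² + a₂λ + (a₃ + a₄λ)∫₀^∞ f(τ)e^{−λτ} dτ + a₅, then E₁ ≥ π·[a₃² + a₄²ω₁² + a₃a₅ − ω₁²(a₄ω₁² + a₁a₃ − a₂a₄)] / (c*·ω₁·(a₃² + a₄²ω₁²)), where c* = sSup {k ∈ ℝ | there exists x > 0 with cos x = 1 − kx/π}. -/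
open MeasureTheory

set_option maxHeartbeats 1000000 in
/-- Let `f : ℝ → ℝ` be a probability density of delay with finite
expectation `E₁ = ∫₀^∞ τ f(τ) dτ`, let `a₁,…,a₅` be real constants, and let
`ω₁ > 0` with `a₃² + a₄²ω₁² ≠ 0`. If `λ = iω₁` is a root of the characteristic
function `χ(λ) = λ³ + a₁λ² + a₂λ + (a₃ + a₄λ)∫₀^∞ f(τ)e^{−λτ} dτ + a₅`, then
`E₁ ≥ π·[a₃² + a₄²ω₁² + a₃a₅ − ω₁²(a₄ω₁² + a₁a₃ − a₂a₄)] / (c*·ω₁·(a₃² + a₄²ω₁²))`,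
where `c* = sSup {k ∈ ℝ | ∃ x > 0, cos x = 1 − kx/π}`. -/
theorem stmt_14 (f : ℝ → ℝ) (a₁ a₂ a₃ a₄ a₅ ω₁ E₁ c : ℝ) (χ : ℂ → ℂ)
    (hf_int : IntegrableOn f (Set.Ioi 0))
    (hf_nonneg : ∀ τ ≥ (0 : ℝ), 0 ≤ f τ)
    (hf_one : ∫ τ in Set.Ioi (0 : ℝ), f τ = 1)
    (hE_int : IntegrableOn (fun τ => τ * f τ) (Set.Ioi 0))
    (hE : E₁ = ∫ τ in Set.Ioi (0 : ℝ), τ * f τ)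
    (hω₁ : ω₁ > 0)
    (hne : a₃ ^ 2 + a₄ ^ 2 * ω₁ ^ 2 ≠ 0)
    (hχ : ∀ lam : ℂ, χ lam = lam ^ 3 + (a₁ : ℂ) * lam ^ 2 + (a₂ : ℂ) * lam +
      ((a₃ : ℂ) + (a₄ : ℂ) * lam) *
        (∫ τ in Set.Ioi (0 : ℝ), (f τ : ℂ) * Complex.exp (-lam * τ)) + (a₅ : ℂ))
    (hroot : χ (Complex.I * ω₁) = 0)
    (hc : c = sSup {k : ℝ | ∃ x > (0 : ℝ), Real.cos x = 1 - k * x / Real.pi}) :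
    E₁ ≥ Real.pi * (a₃ ^ 2 + a₄ ^ 2 * ω₁ ^ 2 + a₃ * a₅ -
        ω₁ ^ 2 * (a₄ * ω₁ ^ 2 + a₁ * a₃ - a₂ * a₄)) /
      (c * ω₁ * (a₃ ^ 2 + a₄ ^ 2 * ω₁ ^ 2)) := by
  have hπ : (0:ℝ) < Real.pi := Real.pi_pos
  -- facts about c
  have hbdd : BddAbove {k : ℝ | ∃ x > (0 : ℝ), Real.cos x = 1 - k * x / Real.pi} := by
    refine ⟨Real.pi, fun k hk => ?_⟩
    obtain ⟨x, hx, hcos⟩ := hk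
    have h1 : 1 - Real.cos x ≤ x := by
      rcases le_total x 2 with h | h
      · have := Real.one_sub_sq_div_two_le_cos (x := x)
        nlinarith
      · nlinarith [Real.neg_one_le_cos x]
    have hkx : k * x / Real.pi = 1 - Real.cos x := by linarith
    have hkx2 : k * x = Real.pi * (1 - Real.cos x) := by
      field_simp at hkx; linarith
    have : k * x ≤ Real.pi * x := by nlinarith
    exact le_of_mul_le_mul_right this hx
  have hmem2 : (2:ℝ) ∈ {k : ℝ | ∃ x > (0 : ℝ), Real.cos x = 1 - k * x / Real.pi} := by
    refine ⟨Real.pi, hπ, ?_⟩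
    rw [Real.cos_pi, eq_sub_iff_add_eq]
    field_simp
    ring
  have hc2 : (2:ℝ) ≤ c := hc ▸ le_csSup hbdd hmem2
  have hcpos : (0:ℝ) < c := by linarith
  have hkey : ∀ x : ℝ, 0 ≤ x → 1 - c * x / Real.pi ≤ Real.cos x := by
    intro x hx
    rcases eq_or_lt_of_le hx with rfl | hx'
    · simp
    · have hmem : Real.pi * (1 - Real.cos x) / x ∈
          {k : ℝ | ∃ y > (0 : ℝ), Real.cos y = 1 - k * y / Real.pi} := by
        refine ⟨x, hx', ?_⟩
        field_simp
        ring
      have hle : Real.pi * (1 - Real.cos x) / x ≤ c := hc ▸ le_csSup hbdd hmem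
      have h3 : Real.pi * (1 - Real.cos x) ≤ c * x := by
        rw [div_le_iff₀ hx'] at hle; linarith [hle]
      have h2 : 1 - Real.cos x ≤ c * x / Real.pi := by
        rw [le_div_iff₀ hπ]; nlinarith
      linarith
  -- positivity of denominator
  have hD : (0:ℝ) < a₃ ^ 2 + a₄ ^ 2 * ω₁ ^ 2 :=
    lt_of_le_of_ne (by positivity) (Ne.symm hne)
  -- the complex integral
  have hg_int : IntegrableOn (fun τ : ℝ => (f τ : ℂ) * Complex.exp (-(Complex.I * ω₁) * τ))
      (Set.Ioi 0) := by
    refine (hf_int.norm.mono' ?_ ?_)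
    · exact (Complex.continuous_ofReal.comp_aestronglyMeasurable hf_int.aestronglyMeasurable).mul
        ((Complex.continuous_exp.comp (by continuity)).aestronglyMeasurable)
    · filter_upwards with τ
      simp only [norm_mul, Complex.norm_real]
      have h1 : ‖Complex.exp (-(Complex.I * ω₁) * τ)‖ = 1 := by
        rw [Complex.norm_exp]
        simp
      rw [h1, mul_one, Real.norm_eq_abs]
  set C := ∫ τ in Set.Ioi (0:ℝ), f τ * Real.cos (ω₁ * τ) with hCdef
  set S := ∫ τ in Set.Ioi (0:ℝ), f τ * Real.sin (ω₁ * τ) with hSdef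
  have hre : ∀ τ : ℝ, ((f τ : ℂ) * Complex.exp (-(Complex.I * ω₁) * τ)).re
      = f τ * Real.cos (ω₁ * τ) := by
    intro τ
    have h : -(Complex.I * ω₁) * τ = ((-(ω₁ * τ) : ℝ) : ℂ) * Complex.I := by
      push_cast; ring
    rw [h, Complex.mul_re, Complex.exp_ofReal_mul_I_re, Complex.exp_ofReal_mul_I_im]
    simp [Real.cos_neg]
  have him : ∀ τ : ℝ, ((f τ : ℂ) * Complex.exp (-(Complex.I * ω₁) * τ)).im
      = -(f τ * Real.sin (ω₁ * τ)) := by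
    intro τ
    have h : -(Complex.I * ω₁) * τ = ((-(ω₁ * τ) : ℝ) : ℂ) * Complex.I := by
      push_cast; ring
    rw [h, Complex.mul_im, Complex.exp_ofReal_mul_I_re, Complex.exp_ofReal_mul_I_im]
    simp [Real.sin_neg]
  have hgval : (∫ τ in Set.Ioi (0:ℝ), (f τ : ℂ) * Complex.exp (-(Complex.I * ω₁) * τ))
      = (C : ℂ) - (S : ℂ) * Complex.I := by
    rw [← setIntegral_re_add_im hg_int]
    simp only [RCLike.re_to_complex, RCLike.im_to_complex, RCLike.I_to_complex,
      show ∀ r : ℝ, (@RCLike.ofReal ℂ _ r) = (r : ℂ) from fun _ => rfl]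
    have h1 : (∫ τ in Set.Ioi (0:ℝ),
        ((f τ : ℂ) * Complex.exp (-(Complex.I * ω₁) * τ)).re) = C := by
      rw [hCdef]; exact setIntegral_congr_fun (by simp) (fun τ _ => hre τ)
    have h2 : (∫ τ in Set.Ioi (0:ℝ),
        ((f τ : ℂ) * Complex.exp (-(Complex.I * ω₁) * τ)).im) = -S := by
      have h3 : (∫ τ in Set.Ioi (0:ℝ),
          ((f τ : ℂ) * Complex.exp (-(Complex.I * ω₁) * τ)).im)
          = ∫ τ in Set.Ioi (0:ℝ), -(f τ * Real.sin (ω₁ * τ)) :=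
        setIntegral_congr_fun (by simp) (fun τ _ => him τ)
      rw [h3, integral_neg, hSdef]
    rw [h1, h2]
    push_cast
    ring
  rw [hχ, hgval] at hroot
  -- split into real and imaginary parts
  have hsplit : ((-a₁ * ω₁^2 + a₃ * C + a₄ * ω₁ * S + a₅ : ℝ) : ℂ)
      + ((-ω₁^3 + a₂ * ω₁ + a₄ * ω₁ * C - a₃ * S : ℝ) : ℂ) * Complex.I = 0 := by
    rw [← hroot]
    push_cast
    simp only [Complex.ext_iff, pow_succ, pow_zero, one_mul, Complex.add_re, Complex.add_im,
      Complex.mul_re, Complex.mul_im, Complex.I_re, Complex.I_im, Complex.ofReal_re,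
      Complex.ofReal_im, Complex.sub_re, Complex.sub_im, Complex.neg_re, Complex.neg_im]
    constructor <;> ring
  rw [Complex.ext_iff] at hsplit
  simp only [Complex.add_re, Complex.add_im, Complex.mul_re, Complex.mul_im,
    Complex.ofReal_re, Complex.ofReal_im, Complex.I_re, Complex.I_im,
    Complex.zero_re, Complex.zero_im] at hsplit
  obtain ⟨hRe, hIm⟩ := hsplit
  have hRe' : -a₁ * ω₁^2 + a₃ * C + a₄ * ω₁ * S + a₅ = 0 := by linarith
  have hIm' : -ω₁^3 + a₂ * ω₁ + a₄ * ω₁ * C - a₃ * S = 0 := by linarith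
  -- solve for C
  have hCval : (a₃ ^ 2 + a₄ ^ 2 * ω₁ ^ 2) * C
      = a₄ * ω₁^4 + (a₁ * a₃ - a₂ * a₄) * ω₁^2 - a₃ * a₅ := by
    linear_combination a₃ * hRe' + (a₄ * ω₁) * hIm'
  -- the integral inequality
  have hcos_int : IntegrableOn (fun τ => f τ * Real.cos (ω₁ * τ)) (Set.Ioi 0) := by
    refine hf_int.norm.mono' ?_ ?_
    · exact hf_int.aestronglyMeasurable.mul
        ((Real.continuous_cos.comp (continuous_const.mul continuous_id)).aestronglyMeasurable)
    · filter_upwards with τ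
      rw [norm_mul, Real.norm_eq_abs, Real.norm_eq_abs]
      calc |f τ| * |Real.cos (ω₁ * τ)| ≤ |f τ| * 1 := by
            gcongr; exact abs_le.mpr ⟨Real.neg_one_le_cos _, Real.cos_le_one _⟩
        _ = |f τ| := mul_one _
  have hfun : (fun τ => f τ * (1 - c * ω₁ * τ / Real.pi))
      = fun τ => f τ - (c * ω₁ / Real.pi) * (τ * f τ) := by
    funext τ; field_simp
  have hlin_int : IntegrableOn (fun τ => f τ * (1 - c * ω₁ * τ / Real.pi)) (Set.Ioi 0) := by
    rw [hfun]
    exact hf_int.sub (hE_int.const_mul _)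
  have hineq : (∫ τ in Set.Ioi (0:ℝ), f τ * (1 - c * ω₁ * τ / Real.pi)) ≤ C := by
    rw [hCdef]
    refine setIntegral_mono_on hlin_int hcos_int (by simp) ?_
    intro τ hτ
    have hτ0 : (0:ℝ) ≤ τ := le_of_lt hτ
    have hfτ := hf_nonneg τ hτ0
    have hk := hkey (ω₁ * τ) (by positivity)
    calc f τ * (1 - c * ω₁ * τ / Real.pi) = f τ * (1 - c * (ω₁ * τ) / Real.pi) := by ring_nf
      _ ≤ f τ * Real.cos (ω₁ * τ) := by gcongr
  have hlin_val : (∫ τ in Set.Ioi (0:ℝ), f τ * (1 - c * ω₁ * τ / Real.pi))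
      = 1 - c * ω₁ / Real.pi * E₁ := by
    rw [hfun, integral_sub hf_int (hE_int.const_mul _), MeasureTheory.integral_const_mul, hf_one, hE]
  rw [hlin_val] at hineq
  -- finish
  have hmul := mul_le_mul_of_nonneg_left hineq hπ.le
  have hid : Real.pi * (1 - c * ω₁ / Real.pi * E₁) = Real.pi - c * ω₁ * E₁ := by
    field_simp
  rw [hid] at hmul
  have h1 : Real.pi * (1 - C) ≤ c * ω₁ * E₁ := by linarith
  have h2 : Real.pi * (1 - C) * (a₃ ^ 2 + a₄ ^ 2 * ω₁ ^ 2)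
      ≤ c * ω₁ * E₁ * (a₃ ^ 2 + a₄ ^ 2 * ω₁ ^ 2) :=
    mul_le_mul_of_nonneg_right h1 hD.le
  rw [ge_iff_le, div_le_iff₀ (by positivity)]
  nlinarith [h2, hCval, hπ]
end
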